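/- Let k be a strictly positive-definite kernel on 𝒳 and let (T, {S_i}, {X̄_i}) be a hierarchical partitioning of 𝒳 (as in the context; strict positive-definiteness of k guarantees each K(X̄_i,X̄_i) is invertible). Then the hierarchically compositional kernel k_hier = k^(root) is strictly positive-definite: for every finite list of pairwise distinct points x₁,…,xₘ ∈ 𝒳 and all real α₁,…,αₘ not all zero, ∑_{i,j} αᵢ αⱼ k_hier(xᵢ,xⱼ) > 0. -/

import Mathlib

open scoped BigOperators

/-- A symmetric function `k` is a positive-definite kernel if for every finite list of
pairwise distinct points `x₁,…,xₘ` and all real coefficients `α₁,…,αₘ`,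
`∑ᵢⱼ αᵢ αⱼ k(xᵢ,xⱼ) ≥ 0`. -/
def PosDefKernel {𝒳 : Type*} (k : 𝒳 → 𝒳 → ℝ) : Prop :=
  ∀ (m : ℕ) (x : Fin m → 𝒳), Function.Injective x →
    ∀ α : Fin m → ℝ, 0 ≤ ∑ i, ∑ j, α i * α j * k (x i) (x j)

/-- A symmetric function `k` is a strictly positive-definite kernel if for every finite list of
pairwise distinct points `x₁,…,xₘ` and all real coefficients not all zero,
`∑ᵢⱼ αᵢ αⱼ k(xᵢ,xⱼ) > 0`. -/
def StrictPosDefKernel {𝒳 : Type*} (k : 𝒳 → 𝒳 → ℝ) : Prop :=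
  ∀ (m : ℕ) (x : Fin m → 𝒳), Function.Injective x →
    ∀ α : Fin m → ℝ, α ≠ 0 → 0 < ∑ i, ∑ j, α i * α j * k (x i) (x j)

/-- A hierarchical partitioning of a set `𝒳`: a finite rooted tree (nodes indexed by
`Fin numNodes`, each nonroot node pointing to its `parent`; nodes are topologically ordered so
that the parent of a nonroot node has a smaller index), assigning to each node `i` a nonempty
subset `S i ⊆ 𝒳` with `S root = 𝒳`, such that the children of any internal node partition it
into pairwise disjoint nonempty cells, every internal node has at least two children, and each
internal node `i` carries a tuple `lm i` of `nlm i` pairwise distinct landmark points belonging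
to `S i` (leaves carry no landmark points). -/
structure HierPartition (𝒳 : Type*) where
  numNodes : ℕ
  root : Fin numNodes
  parent : Fin numNodes → Fin numNodes
  S : Fin numNodes → Set 𝒳
  nlm : Fin numNodes → ℕ
  lm : (i : Fin numNodes) → Fin (nlm i) → 𝒳
  parent_root : parent root = root
  parent_lt : ∀ i, i ≠ root → parent i < i
  S_root : S root = Set.univ
  S_nonempty : ∀ i, (S i).Nonempty
  S_subset : ∀ j, j ≠ root → S j ⊆ S (parent j)
  S_cover : ∀ i, (∃ j, j ≠ root ∧ parent j = i) →
    ∀ x ∈ S i, ∃ j, j ≠ root ∧ parent j = i ∧ x ∈ S j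
  S_disjoint : ∀ j j', j ≠ root → j' ≠ root → parent j = parent j' → j ≠ j' →
    Disjoint (S j) (S j')
  two_children : ∀ i, (∃ j, j ≠ root ∧ parent j = i) →
    ∃ j j', j ≠ root ∧ j' ≠ root ∧ parent j = i ∧ parent j' = i ∧ j ≠ j'
  lm_mem : ∀ i a, lm i a ∈ S i
  lm_inj : ∀ i, Function.Injective (lm i)
  leaf_nlm : ∀ i, (¬∃ j, j ≠ root ∧ parent j = i) → nlm i = 0

namespace HierPartition

variable {𝒳 : Type*}

/-- A node of the tree is a leaf if it has no children. -/
def IsLeaf (H : HierPartition 𝒳) (i : Fin H.numNodes) : Prop :=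
  ¬∃ j, j ≠ H.root ∧ H.parent j = i

/-- The kernel matrix `K(X̄ᵢ, X̄ᵢ)` on the landmark points of node `i`. -/
noncomputable def Kmat (k : 𝒳 → 𝒳 → ℝ) (H : HierPartition 𝒳) (i : Fin H.numNodes) :
    Matrix (Fin (H.nlm i)) (Fin (H.nlm i)) ℝ :=
  Matrix.of fun a b => k (H.lm i a) (H.lm i b)

open Classical in
/-- The row vector `ψ⁽ⁱ⁾(x, X̄ᵢ)` of the hierarchical composition, defined recursively: if the
child `j` of `i` containing `x` is a leaf then `ψ⁽ⁱ⁾(x,X̄ᵢ) = k(x,X̄ᵢ)`, and otherwise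
`ψ⁽ⁱ⁾(x,X̄ᵢ) = ψ⁽ʲ⁾(x,X̄ⱼ)·K(X̄ⱼ,X̄ⱼ)⁻¹·K(X̄ⱼ,X̄ᵢ)`.  (Junk values are returned when `i` is a
leaf or when `x ∉ Sᵢ`.) -/
noncomputable def psi (k : 𝒳 → 𝒳 → ℝ) (H : HierPartition 𝒳) :
    (i : Fin H.numNodes) → 𝒳 → Fin (H.nlm i) → ℝ := fun i x =>
  if h : ∃ j, j ≠ H.root ∧ H.parent j = i ∧ x ∈ H.S j then
    if H.IsLeaf (Classical.choose h) then fun a => k x (H.lm i a)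
    else fun a => ∑ b, ∑ c,
      psi k H (Classical.choose h) x b *
        ((Kmat k H (Classical.choose h))⁻¹ b c) *
        k (H.lm (Classical.choose h) c) (H.lm i a)
  else fun a => k x (H.lm i a)
termination_by i => H.numNodes - i.val
decreasing_by
  have hj := Classical.choose_spec h
  have h1 : i < Classical.choose h := by
    have h2 := H.parent_lt (Classical.choose h) hj.1
    rw [hj.2.1] at h2
    exact h2
  have h1' : i.val < (Classical.choose h).val := h1
  have h2 := (Classical.choose h).isLt
  omega

open Classical in
/-- The hierarchically defined kernel `k⁽ⁱ⁾` at node `i`: for a leaf it is `k` itself; for an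
internal node it equals `k⁽ʲ⁾(x,x')` when `x,x'` belong to a common child `j`, and
`ψ⁽ⁱ⁾(x,X̄ᵢ)·K(X̄ᵢ,X̄ᵢ)⁻¹·ψ⁽ⁱ⁾(X̄ᵢ,x')` otherwise. -/
noncomputable def khat (k : 𝒳 → 𝒳 → ℝ) (H : HierPartition 𝒳) :
    Fin H.numNodes → 𝒳 → 𝒳 → ℝ := fun i x x' =>
  if H.IsLeaf i then k x x'
  else if h : ∃ j, j ≠ H.root ∧ H.parent j = i ∧ x ∈ H.S j ∧ x' ∈ H.S j then
    khat k H (Classical.choose h) x x'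
  else ∑ a, ∑ b, psi k H i x a * ((Kmat k H i)⁻¹ a b) * psi k H i x' b
termination_by i x x' => H.numNodes - i.val
decreasing_by
  have hj := Classical.choose_spec h
  have h1 := H.parent_lt (Classical.choose h) hj.1
  rw [hj.2.1] at h1
  have h1' := Fin.lt_def.mp h1
  have h2 := (Classical.choose h).isLt
  omega

/-- The hierarchically compositional kernel `k_hier = k^(root)`. -/
noncomputable def kHier (k : 𝒳 → 𝒳 → ℝ) (H : HierPartition 𝒳) : 𝒳 → 𝒳 → ℝ :=
  khat k H H.root

end HierPartition

lemma sum_mul_sum_mul {ι : Type*} [Fintype ι] (a b : ι → ℝ) (c : ℝ) :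
    (∑ t, a t) * (∑ t', b t') * c = ∑ t, ∑ t', a t * b t' * c := by
  rw [Finset.sum_mul_sum, Finset.sum_mul]
  exact Finset.sum_congr rfl fun t _ => by rw [Finset.sum_mul]

lemma quadform_key {𝒳 : Type*} [DecidableEq 𝒳] (k : 𝒳 → 𝒳 → ℝ) (hk : StrictPosDefKernel k)
    {ι : Type*} [Fintype ι] (w : ι → 𝒳) (γ : ι → ℝ) :
    0 ≤ ∑ t, ∑ t', γ t * γ t' * k (w t) (w t') ∧
      ((∑ t, ∑ t', γ t * γ t' * k (w t) (w t')) = 0 →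
        ∀ z, (∑ t, if w t = z then γ t else 0) = 0) := by
  classical
  set s : Finset 𝒳 := Finset.univ.image w with hs
  set β : 𝒳 → ℝ := fun z => ∑ t, if w t = z then γ t else 0 with hβ
  have hmem : ∀ t, w t ∈ s := fun t => Finset.mem_image_of_mem w (Finset.mem_univ t)
  have collapse : ∀ (t t' : ι),
      γ t * γ t' * k (w t) (w t')
        = ∑ p ∈ s ×ˢ s, (if w t = p.1 then γ t else 0) * (if w t' = p.2 then γ t' else 0)
            * k p.1 p.2 := by
    intro t t'
    rw [Finset.sum_product]
    rw [Finset.sum_eq_single (w t)]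
    · rw [Finset.sum_eq_single (w t')]
      · simp
      · intro b _ hb; simp [Ne.symm hb]
      · intro h; exact absurd (hmem t') h
    · intro b _ hb
      simp [Ne.symm hb]
    · intro h; exact absurd (hmem t) h
  have hQ : (∑ t, ∑ t', γ t * γ t' * k (w t) (w t'))
      = ∑ z ∈ s, ∑ z' ∈ s, β z * β z' * k z z' := by
    calc (∑ t, ∑ t', γ t * γ t' * k (w t) (w t'))
        = ∑ t, ∑ t', ∑ p ∈ s ×ˢ s,
            (if w t = p.1 then γ t else 0) * (if w t' = p.2 then γ t' else 0) * k p.1 p.2 :=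
          Finset.sum_congr rfl fun t _ => Finset.sum_congr rfl fun t' _ => collapse t t'
      _ = ∑ q ∈ Finset.univ ×ˢ (Finset.univ : Finset ι), ∑ p ∈ s ×ˢ s,
            (if w q.1 = p.1 then γ q.1 else 0) * (if w q.2 = p.2 then γ q.2 else 0)
              * k p.1 p.2 := by rw [Finset.sum_product]
      _ = ∑ p ∈ s ×ˢ s, ∑ q ∈ Finset.univ ×ˢ (Finset.univ : Finset ι),
            (if w q.1 = p.1 then γ q.1 else 0) * (if w q.2 = p.2 then γ q.2 else 0)
              * k p.1 p.2 := Finset.sum_comm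
      _ = ∑ p ∈ s ×ˢ s, β p.1 * β p.2 * k p.1 p.2 := by
          refine Finset.sum_congr rfl fun p _ => ?_
          rw [Finset.sum_product]
          exact (sum_mul_sum_mul (fun t => if w t = p.1 then γ t else 0)
            (fun t' => if w t' = p.2 then γ t' else 0) (k p.1 p.2)).symm
      _ = ∑ z ∈ s, ∑ z' ∈ s, β z * β z' * k z z' := by rw [Finset.sum_product]
  -- enumerate s
  let e := s.equivFin
  set m := s.card
  set x : Fin m → 𝒳 := fun a => (e.symm a : 𝒳) with hx
  have hxinj : Function.Injective x := fun a b hab => by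
    apply e.symm.injective; exact Subtype.ext hab
  set α : Fin m → ℝ := fun a => β (x a) with hα
  have hQ2 : (∑ z ∈ s, ∑ z' ∈ s, β z * β z' * k z z')
      = ∑ a, ∑ b, α a * α b * k (x a) (x b) := by
    rw [← Finset.sum_coe_sort s (fun z => ∑ z' ∈ s, β z * β z' * k z z'),
        ← Equiv.sum_comp e.symm]
    refine Finset.sum_congr rfl fun a _ => ?_
    rw [← Finset.sum_coe_sort s (fun z' => β (x a) * β z' * k (x a) z'),
        ← Equiv.sum_comp e.symm]
  by_cases hα0 : α = 0
  · have hz : (∑ z ∈ s, ∑ z' ∈ s, β z * β z' * k z z') = 0 := by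
      rw [hQ2, hα0]; simp
    have hβ0 : ∀ z, β z = 0 := by
      intro z
      by_cases hzs : z ∈ s
      · obtain ⟨a, ha⟩ : ∃ a, x a = z := ⟨e ⟨z, hzs⟩, by simp [hx]⟩
        have := congrFun hα0 a
        simpa [hα, ha] using this
      · refine Finset.sum_eq_zero fun t _ => ?_
        have : w t ≠ z := fun h => hzs (h ▸ hmem t)
        simp [this]
    exact ⟨by rw [hQ, hz], fun _ z => hβ0 z⟩
  · have hpos := hk m x hxinj α hα0
    constructor
    · rw [hQ, hQ2]; exact le_of_lt hpos
    · intro h0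
      rw [hQ, hQ2] at h0
      exact absurd h0 (ne_of_gt hpos)

namespace HierPartition

open Matrix

variable {𝒳 : Type*} (k : 𝒳 → 𝒳 → ℝ) (H : HierPartition 𝒳)

/-- j is a child of i -/
def ChildOf (H : HierPartition 𝒳) (j i : Fin H.numNodes) : Prop :=
  j ≠ H.root ∧ H.parent j = i

lemma child_unique {i j j' : Fin H.numNodes} (hj : H.ChildOf j i) (hj' : H.ChildOf j' i)
    {x : 𝒳} (hx : x ∈ H.S j) (hx' : x ∈ H.S j') : j = j' := by
  by_contra hne
  exact Set.disjoint_left.mp (H.S_disjoint j j' hj.1 hj'.1 (hj.2.trans hj'.2.symm) hne) hx hx'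

lemma lt_of_childOf {i j : Fin H.numNodes} (hj : H.ChildOf j i) : i < j := by
  have := H.parent_lt j hj.1
  rwa [hj.2] at this

open Classical in
lemma psi_eq {i j : Fin H.numNodes} (hj : H.ChildOf j i) {x : 𝒳} (hx : x ∈ H.S j) :
    psi k H i x = if H.IsLeaf j then fun a => k x (H.lm i a)
      else fun a => ∑ b, ∑ c, psi k H j x b * ((Kmat k H j)⁻¹ b c) *
        k (H.lm j c) (H.lm i a) := by
  have h : ∃ j', j' ≠ H.root ∧ H.parent j' = i ∧ x ∈ H.S j' := ⟨j, hj.1, hj.2, hx⟩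
  have hcs := Classical.choose_spec h
  have hch : Classical.choose h = j :=
    child_unique H ⟨hcs.1, hcs.2.1⟩ hj hcs.2.2 hx
  rw [psi, dif_pos h, hch]

lemma khat_leaf {i : Fin H.numNodes} (hi : H.IsLeaf i) (x x' : 𝒳) :
    khat k H i x x' = k x x' := by
  rw [khat, if_pos hi]

lemma khat_same {i j : Fin H.numNodes} (hi : ¬H.IsLeaf i) (hj : H.ChildOf j i)
    {x x' : 𝒳} (hx : x ∈ H.S j) (hx' : x' ∈ H.S j) :
    khat k H i x x' = khat k H j x x' := by
  have h : ∃ j', j' ≠ H.root ∧ H.parent j' = i ∧ x ∈ H.S j' ∧ x' ∈ H.S j' :=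
    ⟨j, hj.1, hj.2, hx, hx'⟩
  have hcs := Classical.choose_spec h
  have hch : Classical.choose h = j :=
    child_unique H ⟨hcs.1, hcs.2.1⟩ hj hcs.2.2.1 hx
  rw [khat, if_neg hi, dif_pos h, hch]

lemma khat_diff {i j j' : Fin H.numNodes} (hi : ¬H.IsLeaf i) (hj : H.ChildOf j i)
    (hj' : H.ChildOf j' i) (hne : j ≠ j') {x x' : 𝒳} (hx : x ∈ H.S j) (hx' : x' ∈ H.S j') :
    khat k H i x x' = ∑ a, ∑ b, psi k H i x a * ((Kmat k H i)⁻¹ a b) * psi k H i x' b := by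
  have h : ¬∃ j'', j'' ≠ H.root ∧ H.parent j'' = i ∧ x ∈ H.S j'' ∧ x' ∈ H.S j'' := by
    rintro ⟨j'', h1, h2, h3, h4⟩
    exact hne ((child_unique H ⟨h1, h2⟩ hj h3 hx).symm.trans
      (child_unique H ⟨h1, h2⟩ hj' h4 hx'))
  rw [khat, if_neg hi, dif_neg h]

lemma Kmat_posDef (hsym : ∀ x y, k x y = k y x) (hk : StrictPosDefKernel k)
    (i : Fin H.numNodes) : (Kmat k H i).PosDef := by
  refine Matrix.PosDef.of_dotProduct_mulVec_pos ?_ ?_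
  · ext a b
    simp [Kmat, Matrix.conjTranspose, hsym (H.lm i a) (H.lm i b)]
  · intro v hv
    have h1 := hk (H.nlm i) (H.lm i) (H.lm_inj i) v hv
    have e : dotProduct (star v) ((Kmat k H i) *ᵥ v)
        = ∑ a, ∑ b, v a * v b * k (H.lm i a) (H.lm i b) := by
      simp only [dotProduct, Matrix.mulVec, Kmat, Matrix.of_apply, star_trivial,
        Finset.mul_sum]
      exact Finset.sum_congr rfl fun a _ => Finset.sum_congr rfl fun b _ => by ring
    rw [e]
    exact h1

end HierPartition

open Matrix in
lemma ddot {m n : ℕ} (M : Matrix (Fin m) (Fin n) ℝ) (u : Fin m → ℝ) (w : Fin n → ℝ) :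
    ∑ a, ∑ b, u a * M a b * w b = u ⬝ᵥ M *ᵥ w := by
  simp only [dotProduct, Matrix.mulVec, Finset.mul_sum]
  exact Finset.sum_congr rfl fun a _ => Finset.sum_congr rfl fun b _ => by ring

open Matrix in
lemma symdot {n : ℕ} {M : Matrix (Fin n) (Fin n) ℝ} (hM : Mᵀ = M) (u w : Fin n → ℝ) :
    u ⬝ᵥ M *ᵥ w = w ⬝ᵥ M *ᵥ u := by
  rw [Matrix.dotProduct_mulVec, ← hM, Matrix.vecMul_transpose, hM, dotProduct_comm]

lemma swap4 {ι κ : Type*} [Fintype ι] [Fintype κ] (f : ι → ι → κ → κ → ℝ) :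
    ∑ p, ∑ q, ∑ a, ∑ b, f p q a b = ∑ a, ∑ b, ∑ p, ∑ q, f p q a b := by
  calc ∑ p, ∑ q, ∑ a, ∑ b, f p q a b
      = ∑ p, ∑ a, ∑ q, ∑ b, f p q a b :=
        Finset.sum_congr rfl fun p _ => Finset.sum_comm
    _ = ∑ a, ∑ p, ∑ q, ∑ b, f p q a b := Finset.sum_comm
    _ = ∑ a, ∑ p, ∑ b, ∑ q, f p q a b :=
        Finset.sum_congr rfl fun a _ => Finset.sum_congr rfl fun p _ => Finset.sum_comm
    _ = ∑ a, ∑ b, ∑ p, ∑ q, f p q a b :=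
        Finset.sum_congr rfl fun a _ => Finset.sum_comm

lemma quad_collapse {ι : Type*} [Fintype ι] {n : ℕ} (M : Fin n → Fin n → ℝ)
    (α : ι → ℝ) (ψ : ι → Fin n → ℝ) :
    ∑ p, ∑ q, α p * α q * (∑ a, ∑ b, ψ p a * M a b * ψ q b)
      = ∑ a, ∑ b, (∑ p, α p * ψ p a) * M a b * (∑ q, α q * ψ q b) := by
  have step : ∀ p q, α p * α q * (∑ a, ∑ b, ψ p a * M a b * ψ q b)
      = ∑ a, ∑ b, (α p * ψ p a) * (α q * ψ q b) * M a b := by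
    intro p q
    rw [Finset.mul_sum]
    exact Finset.sum_congr rfl fun a _ => by
      rw [Finset.mul_sum]
      exact Finset.sum_congr rfl fun b _ => by ring
  calc ∑ p, ∑ q, α p * α q * (∑ a, ∑ b, ψ p a * M a b * ψ q b)
      = ∑ p, ∑ q, ∑ a, ∑ b, (α p * ψ p a) * (α q * ψ q b) * M a b :=
        Finset.sum_congr rfl fun p _ => Finset.sum_congr rfl fun q _ => step p q
    _ = ∑ a, ∑ b, ∑ p, ∑ q, (α p * ψ p a) * (α q * ψ q b) * M a b := swap4 _
    _ = ∑ a, ∑ b, (∑ p, α p * ψ p a) * M a b * (∑ q, α q * ψ q b) := by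
        refine Finset.sum_congr rfl fun a _ => Finset.sum_congr rfl fun b _ => ?_
        rw [← sum_mul_sum_mul (fun p => α p * ψ p a) (fun q => α q * ψ q b) (M a b)]
        ring

open Matrix in
lemma posdef_facts {n : ℕ} {M : Matrix (Fin n) (Fin n) ℝ} (hM : M.PosDef) (u : Fin n → ℝ) :
    0 ≤ u ⬝ᵥ M *ᵥ u ∧ (u ⬝ᵥ M *ᵥ u = 0 → u = 0) := by
  by_cases hu : u = 0
  · subst hu; simp
  · have := hM.dotProduct_mulVec_pos hu
    exact ⟨le_of_lt (by simpa using this), fun h0 => absurd h0 (by simpa using ne_of_gt this)⟩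

open Matrix in
lemma inv_mulVec_cancel {n : ℕ} {M : Matrix (Fin n) (Fin n) ℝ} (hM : IsUnit M.det)
    (u : Fin n → ℝ) : M *ᵥ (M⁻¹ *ᵥ u) = u := by
  rw [Matrix.mulVec_mulVec, Matrix.mul_nonsing_inv M hM, Matrix.one_mulVec]

open Matrix in
example (n : ℕ) (u : Fin n → ℝ) (M : Matrix (Fin n) (Fin n) ℝ): M *ᵥ (0 : Fin n → ℝ) = 0 := Matrix.mulVec_zero M
example (ι : Type) [Fintype ι] (β : Type) [Fintype β] (f : ι ⊕ β → ℝ) :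
    ∑ t, f t = ∑ a, f (Sum.inl a) + ∑ b, f (Sum.inr b) := Fintype.sum_sum_type f

namespace HierPartition

open Matrix

variable {𝒳 : Type*}

lemma main_ind [DecidableEq 𝒳] (k : 𝒳 → 𝒳 → ℝ) (hsym : ∀ x y, k x y = k y x)
    (hk : StrictPosDefKernel k) (H : HierPartition 𝒳) :
    ∀ (n : ℕ) (i : Fin H.numNodes), H.numNodes - i.val ≤ n →
    ∀ (ι : Type) (_ : Fintype ι) (x : ι → 𝒳), Function.Injective x →
    (∀ p, x p ∈ H.S i) →
    ∀ (α : ι → ℝ) (c : Fin (H.nlm i) → ℝ),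
    0 ≤ (∑ p, ∑ q, α p * α q * khat k H i (x p) (x q))
        - 2 * (∑ p, α p * (∑ a, psi k H i (x p) a * c a))
        + (∑ a, ∑ b, c a * Kmat k H i a b * c b) ∧
      ((∑ p, ∑ q, α p * α q * khat k H i (x p) (x q))
          - 2 * (∑ p, α p * (∑ a, psi k H i (x p) a * c a))
          + (∑ a, ∑ b, c a * Kmat k H i a b * c b) = 0 →
        ∀ z : 𝒳, (∑ p, if x p = z then α p else 0)
          = ∑ a, if H.lm i a = z then c a else 0) := by
  intro n
  induction n with
  | zero =>
    intro i hn
    exact absurd hn (by have := i.isLt; omega)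
  | succ n IH =>
    intro i hn ι _ x hinj hxS α c
    by_cases hleaf : H.IsLeaf i
    · -- leaf case
      have hn0 : H.nlm i = 0 := H.leaf_nlm i hleaf
      haveI : IsEmpty (Fin (H.nlm i)) := by rw [hn0]; infer_instance
      simp only [Finset.univ_eq_empty, Finset.sum_empty, mul_zero, sub_zero, add_zero,
        Finset.sum_const_zero, khat_leaf k H hleaf]
      exact quadform_key k hk x α
    · -- internal case
      classical
      have hex : ∃ j, j ≠ H.root ∧ H.parent j = i := not_not.mp hleaf
      choose J hJ1 hJ2 hJ3 using fun p => H.S_cover i hex (x p) (hxS p)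
      have hchild : ∀ p, H.ChildOf (J p) i := fun p => ⟨hJ1 p, hJ2 p⟩
      have hK : (Kmat k H i).PosDef := Kmat_posDef k H hsym hk i
      have hKdet : IsUnit (Kmat k H i).det := hK.det_pos.ne'.isUnit
      have hKsym : (Kmat k H i)ᵀ = Kmat k H i := by
        ext a b; simp [Kmat, hsym (H.lm i b) (H.lm i a)]
      set v : Fin (H.nlm i) → ℝ := fun a => ∑ p, α p * psi k H i (x p) a with hv
      set vj : Fin H.numNodes → Fin (H.nlm i) → ℝ :=
        fun j a => ∑ p, if J p = j then α p * psi k H i (x p) a else 0 with hvj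
      set dj : Fin H.numNodes → Fin (H.nlm i) → ℝ :=
        fun j => (Kmat k H i)⁻¹ *ᵥ (vj j) with hdj
      set w : Fin (H.nlm i) → ℝ := (Kmat k H i)⁻¹ *ᵥ v - c with hw
      set Aj : Fin H.numNodes → ℝ := fun j => ∑ p, ∑ q,
        (if J p = j ∧ J q = j then
          α p * α q * (khat k H j (x p) (x q)
            - ∑ a, ∑ b, psi k H i (x p) a * ((Kmat k H i)⁻¹ a b) * psi k H i (x q) b)
        else 0) with hAjdef
      -- sum of vj over all j is v
      have hvsum : ∀ a, ∑ j, vj j a = v a := by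
        intro a
        simp only [hvj, hv]
        rw [Finset.sum_comm]
        refine Finset.sum_congr rfl fun p _ => ?_
        rw [Finset.sum_eq_single (J p)]
        · simp
        · intro b _ hb; simp [Ne.symm hb]
        · intro h; exact absurd (Finset.mem_univ _) h
      -- decomposition
      have hdecomp :
          (∑ p, ∑ q, α p * α q * khat k H i (x p) (x q))
            - 2 * (∑ p, α p * (∑ a, psi k H i (x p) a * c a))
            + (∑ a, ∑ b, c a * Kmat k H i a b * c b)
          = (∑ j, Aj j) + w ⬝ᵥ (Kmat k H i) *ᵥ w := by
        have split : ∀ p q, α p * α q * khat k H i (x p) (x q)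
            = (if J p = J q then
                α p * α q * (khat k H (J p) (x p) (x q)
                  - ∑ a, ∑ b, psi k H i (x p) a * ((Kmat k H i)⁻¹ a b) * psi k H i (x q) b)
              else 0)
              + α p * α q * (∑ a, ∑ b, psi k H i (x p) a * ((Kmat k H i)⁻¹ a b)
                  * psi k H i (x q) b) := by
          intro p q
          by_cases hpq : J p = J q
          · rw [if_pos hpq, khat_same k H hleaf (hchild p) (hJ3 p) (hpq.symm ▸ hJ3 q)]
            ring
          · rw [if_neg hpq, khat_diff k H hleaf (hchild p) (hchild q) hpq (hJ3 p) (hJ3 q)]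
            ring
        have e1 : (∑ p, ∑ q, α p * α q * khat k H i (x p) (x q))
            = (∑ j, Aj j) + ∑ p, ∑ q, α p * α q * (∑ a, ∑ b,
                psi k H i (x p) a * ((Kmat k H i)⁻¹ a b) * psi k H i (x q) b) := by
          have regroup : (∑ j, Aj j) = ∑ p, ∑ q, (if J p = J q then
                α p * α q * (khat k H (J p) (x p) (x q)
                  - ∑ a, ∑ b, psi k H i (x p) a * ((Kmat k H i)⁻¹ a b) * psi k H i (x q) b)
              else 0) := by
            simp only [hAjdef]
            rw [Finset.sum_comm]
            refine Finset.sum_congr rfl fun p _ => ?_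
            rw [Finset.sum_comm]
            refine Finset.sum_congr rfl fun q _ => ?_
            rw [Finset.sum_eq_single (J p)]
            · by_cases hpq : J p = J q
              · simp [hpq]
              · have : ¬(J q = J p) := fun h => hpq h.symm
                simp [hpq, this]
            · intro b _ hb
              simp [Ne.symm hb]
            · intro h; exact absurd (Finset.mem_univ _) h
          calc (∑ p, ∑ q, α p * α q * khat k H i (x p) (x q))
              = ∑ p, ∑ q, ((if J p = J q then
                  α p * α q * (khat k H (J p) (x p) (x q)
                    - ∑ a, ∑ b, psi k H i (x p) a * ((Kmat k H i)⁻¹ a b) * psi k H i (x q) b)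
                else 0)
                + α p * α q * (∑ a, ∑ b, psi k H i (x p) a * ((Kmat k H i)⁻¹ a b)
                    * psi k H i (x q) b)) :=
                Finset.sum_congr rfl fun p _ => Finset.sum_congr rfl fun q _ => split p q
            _ = (∑ j, Aj j) + ∑ p, ∑ q, α p * α q * (∑ a, ∑ b,
                  psi k H i (x p) a * ((Kmat k H i)⁻¹ a b) * psi k H i (x q) b) := by
                simp only [Finset.sum_add_distrib]
                rw [regroup]
        have e2 : (∑ p, ∑ q, α p * α q * (∑ a, ∑ b,
              psi k H i (x p) a * ((Kmat k H i)⁻¹ a b) * psi k H i (x q) b))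
            = v ⬝ᵥ (Kmat k H i)⁻¹ *ᵥ v := by
          rw [quad_collapse (fun a b => ((Kmat k H i)⁻¹) a b) α (fun p => psi k H i (x p)),
            ← ddot ((Kmat k H i)⁻¹) v v]
        have e3 : (∑ p, α p * (∑ a, psi k H i (x p) a * c a)) = v ⬝ᵥ c := by
          simp only [Finset.mul_sum, dotProduct]
          rw [Finset.sum_comm]
          simp only [hv, Finset.sum_mul]
          exact Finset.sum_congr rfl fun a _ => Finset.sum_congr rfl fun p _ => by ring
        have e4 : (∑ a, ∑ b, c a * Kmat k H i a b * c b) = c ⬝ᵥ (Kmat k H i) *ᵥ c :=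
          ddot (Kmat k H i) c c
        have e5 : v ⬝ᵥ (Kmat k H i)⁻¹ *ᵥ v - 2 * (v ⬝ᵥ c) + c ⬝ᵥ (Kmat k H i) *ᵥ c
            = w ⬝ᵥ (Kmat k H i) *ᵥ w := by
          rw [hw]
          have h1 : (Kmat k H i) *ᵥ ((Kmat k H i)⁻¹ *ᵥ v - c)
              = v - (Kmat k H i) *ᵥ c := by
            rw [Matrix.mulVec_sub, inv_mulVec_cancel hKdet]
          rw [h1, sub_dotProduct, dotProduct_sub, dotProduct_sub]
          have h2 : ((Kmat k H i)⁻¹ *ᵥ v) ⬝ᵥ v = v ⬝ᵥ (Kmat k H i)⁻¹ *ᵥ v :=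
            dotProduct_comm _ _
          have h3 : ((Kmat k H i)⁻¹ *ᵥ v) ⬝ᵥ ((Kmat k H i) *ᵥ c)
              = v ⬝ᵥ c := by
            rw [symdot hKsym ((Kmat k H i)⁻¹ *ᵥ v) c, inv_mulVec_cancel hKdet,
              dotProduct_comm]
          have h4 : c ⬝ᵥ v = v ⬝ᵥ c := dotProduct_comm _ _
          rw [h2, h3, h4]
          ring
        rw [e1, e2, e3, e4, ← e5]
        ring
      -- per-child analysis
      have hKd : ∀ j, (Kmat k H i) *ᵥ dj j = vj j := by
        intro j; simp only [hdj]; exact inv_mulVec_cancel hKdet _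
      have hAj : ∀ j, 0 ≤ Aj j ∧ (Aj j = 0 → ∀ z : 𝒳,
          (∑ p, if J p = j ∧ x p = z then α p else 0)
            = ∑ a, if H.lm i a = z then dj j a else 0) := by
        intro j
        by_cases hcj : H.ChildOf j i
        case neg =>
          have hnop : ∀ p, J p ≠ j := fun p h => hcj (h ▸ hchild p)
          have hA0 : Aj j = 0 := by
            simp only [hAjdef]
            exact Finset.sum_eq_zero fun p _ => Finset.sum_eq_zero fun q _ => by
              simp [hnop p]
          have hdj0 : dj j = 0 := by
            have hvj0 : vj j = 0 := by
              funext a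
              simp only [hvj]
              exact Finset.sum_eq_zero fun p _ => by simp [hnop p]
            simp only [hdj, hvj0, Matrix.mulVec_zero]
          refine ⟨le_of_eq hA0.symm, fun _ z => ?_⟩
          rw [Finset.sum_eq_zero fun p _ => by simp [hnop p],
            Finset.sum_eq_zero fun a _ => by simp [hdj0]]
        case pos =>
        have hij : i < j := lt_of_childOf H hcj
        have hxj : ∀ p : {p : ι // J p = j}, x p.1 ∈ H.S j := fun p => by
          have := hJ3 p.1; rwa [p.2] at this
        have conv1 : ∀ (f : ι → ℝ), (∑ p, if J p = j then f p else 0)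
            = ∑ p : {p : ι // J p = j}, f p.1 := by
          intro f
          rw [← Finset.sum_filter]
          exact Finset.sum_subtype _ (by simp) f
        have conv2 : ∀ (g : ι → ι → ℝ),
            (∑ p, ∑ q, if J p = j ∧ J q = j then g p q else 0)
              = ∑ p : {p : ι // J p = j}, ∑ q : {p : ι // J p = j}, g p.1 q.1 := by
          intro g
          have step : ∀ p, (∑ q, if J p = j ∧ J q = j then g p q else 0)
              = if J p = j then (∑ q, if J q = j then g p q else 0) else 0 := by
            intro p; by_cases hp : J p = j <;> simp [hp]
          rw [Finset.sum_congr rfl fun p _ => step p,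
            conv1 (fun p => ∑ q, if J q = j then g p q else 0)]
          exact Finset.sum_congr rfl fun p _ => conv1 _
        have hvjP : vj j = fun a => ∑ p : {p : ι // J p = j},
            α p.1 * psi k H i (x p.1) a := by
          funext a
          simp only [hvj]
          exact conv1 _
        have hAjP : Aj j = (∑ p : {p : ι // J p = j}, ∑ q : {p : ι // J p = j},
              α p.1 * α q.1 * khat k H j (x p.1) (x q.1))
            - vj j ⬝ᵥ (Kmat k H i)⁻¹ *ᵥ vj j := by
          simp only [hAjdef]
          rw [conv2 (fun p q => α p * α q * (khat k H j (x p) (x q)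
            - ∑ a, ∑ b, psi k H i (x p) a * ((Kmat k H i)⁻¹ a b) * psi k H i (x q) b))]
          simp only [mul_sub]
          rw [Finset.sum_congr rfl fun p _ => Finset.sum_sub_distrib _ _,
            Finset.sum_sub_distrib]
          congr 1
          rw [quad_collapse (fun a b => ((Kmat k H i)⁻¹) a b)
            (fun p : {p : ι // J p = j} => α p.1)
            (fun p : {p : ι // J p = j} => psi k H i (x p.1)), hvjP, ← ddot]
        by_cases hjleaf : H.IsLeaf j
        · -- leaf child
          have hψP : ∀ p : {p : ι // J p = j}, psi k H i (x p.1)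
              = fun a => k (x p.1) (H.lm i a) := by
            intro p
            rw [psi_eq k H hcj (hxj p), if_pos hjleaf]
          have hq := quadform_key k hk
            (Sum.elim (fun p : {p : ι // J p = j} => x p.1) (H.lm i))
            (Sum.elim (fun p : {p : ι // J p = j} => α p.1) (fun a => - dj j a))
          set S : ℝ := ∑ a, (∑ p : {p : ι // J p = j},
            α p.1 * k (x p.1) (H.lm i a)) * dj j a with hSdef
          have hS' : S = ∑ p : {p : ι // J p = j}, ∑ a,
              α p.1 * k (x p.1) (H.lm i a) * dj j a := by
            simp only [hSdef, Finset.sum_mul]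
            exact Finset.sum_comm
          have hvjd : vj j ⬝ᵥ dj j = S := by
            simp only [dotProduct, hSdef, hvjP]
            refine Finset.sum_congr rfl fun a _ => ?_
            congr 1
            refine Finset.sum_congr rfl fun p _ => ?_
            rw [hψP p]
          have hdKd : dj j ⬝ᵥ (Kmat k H i) *ᵥ dj j = S := by
            rw [hKd j, dotProduct_comm, hvjd]
          have hAQ : (∑ t, ∑ t',
                (Sum.elim (fun p : {p : ι // J p = j} => α p.1) (fun a => - dj j a)) t
                * (Sum.elim (fun p : {p : ι // J p = j} => α p.1) (fun a => - dj j a)) t'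
                * k ((Sum.elim (fun p : {p : ι // J p = j} => x p.1) (H.lm i)) t)
                    ((Sum.elim (fun p : {p : ι // J p = j} => x p.1) (H.lm i)) t'))
              = Aj j := by
            rw [hAjP]
            simp only [Fintype.sum_sum_type, Sum.elim_inl, Sum.elim_inr]
            rw [Finset.sum_add_distrib, Finset.sum_add_distrib]
            have hPP : (∑ p : {p : ι // J p = j}, ∑ q : {p : ι // J p = j},
                  α p.1 * α q.1 * k (x p.1) (x q.1))
                = ∑ p : {p : ι // J p = j}, ∑ q : {p : ι // J p = j},
                  α p.1 * α q.1 * khat k H j (x p.1) (x q.1) := by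
              simp only [khat_leaf k H hjleaf]
            have hPL : (∑ p : {p : ι // J p = j}, ∑ a,
                  α p.1 * (- dj j a) * k (x p.1) (H.lm i a)) = -S := by
              rw [hS', ← Finset.sum_neg_distrib]
              refine Finset.sum_congr rfl fun p _ => ?_
              rw [← Finset.sum_neg_distrib]
              exact Finset.sum_congr rfl fun a _ => by ring
            have hLP : (∑ a, ∑ q : {p : ι // J p = j},
                  (- dj j a) * α q.1 * k (H.lm i a) (x q.1)) = -S := by
              rw [hSdef, ← Finset.sum_neg_distrib]
              refine Finset.sum_congr rfl fun a _ => ?_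
              rw [Finset.sum_mul, ← Finset.sum_neg_distrib]
              refine Finset.sum_congr rfl fun q _ => ?_
              rw [hsym (H.lm i a) (x q.1)]
              ring
            have hLL : (∑ a, ∑ b, (- dj j a) * (- dj j b) * k (H.lm i a) (H.lm i b)) = S := by
              rw [← hdKd, ← ddot (Kmat k H i) (dj j) (dj j)]
              exact Finset.sum_congr rfl fun a _ => Finset.sum_congr rfl fun b _ => by
                simp [Kmat]; ring
            rw [hPP, hPL, hLP, hLL]
            have hvjd' := hvjd
            simp only [hdj] at hvjd'
            rw [hvjd']
            ring
          constructor
          · rw [← hAQ]; exact hq.1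
          · intro hA0 z
            have h0 := hq.2 (by rw [hAQ]; exact hA0) z
            simp only [Fintype.sum_sum_type, Sum.elim_inl, Sum.elim_inr] at h0
            have hL : (∑ p, if J p = j ∧ x p = z then α p else 0)
                = ∑ p : {p : ι // J p = j}, if x p.1 = z then α p.1 else 0 := by
              rw [← conv1 (fun p => if x p = z then α p else 0)]
              refine Finset.sum_congr rfl fun p _ => ?_
              by_cases hp : J p = j <;> by_cases hxz : x p = z <;> simp [hp, hxz]
            have hR : (∑ a, if H.lm i a = z then - dj j a else 0)
                = - ∑ a, if H.lm i a = z then dj j a else 0 := by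
              rw [← Finset.sum_neg_distrib]
              exact Finset.sum_congr rfl fun a _ => by
                by_cases hz : H.lm i a = z <;> simp [hz]
            replace h0 : (∑ p : {p : ι // J p = j}, if x p.1 = z then α p.1 else 0)
                + - (∑ a, if H.lm i a = z then dj j a else 0) = 0 := by
              rw [← hR]; exact h0
            rw [hL]
            linarith
        · -- internal child
          have hKj : (Kmat k H j).PosDef := Kmat_posDef k H hsym hk j
          have hKjdet : IsUnit (Kmat k H j).det := hKj.det_pos.ne'.isUnit
          have hψP : ∀ p : {p : ι // J p = j}, psi k H i (x p.1)
              = fun a => ∑ b, ∑ e, psi k H j (x p.1) b * ((Kmat k H j)⁻¹ b e)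
                  * k (H.lm j e) (H.lm i a) := by
            intro p
            rw [psi_eq k H hcj (hxj p), if_neg hjleaf]
          set Kji : Matrix (Fin (H.nlm j)) (Fin (H.nlm i)) ℝ :=
            Matrix.of (fun b a => k (H.lm j b) (H.lm i a)) with hKjidef
          set u : Fin (H.nlm j) → ℝ :=
            fun b => ∑ p : {p : ι // J p = j}, α p.1 * psi k H j (x p.1) b with hu
          set wv : Fin (H.nlm j) → ℝ := Kji *ᵥ dj j with hwv
          set cj : Fin (H.nlm j) → ℝ := (Kmat k H j)⁻¹ *ᵥ wv with hcjdef
          have hvju : vj j = u ᵥ* ((Kmat k H j)⁻¹ * Kji) := by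
            rw [hvjP]
            funext a
            calc (∑ p : {p : ι // J p = j}, α p.1 * psi k H i (x p.1) a)
                = ∑ p : {p : ι // J p = j}, ∑ b, ∑ e,
                    (α p.1 * psi k H j (x p.1) b) * ((Kmat k H j)⁻¹ b e * Kji e a) := by
                  refine Finset.sum_congr rfl fun p _ => ?_
                  rw [hψP p]
                  rw [Finset.mul_sum]
                  refine Finset.sum_congr rfl fun b _ => ?_
                  rw [Finset.mul_sum]
                  refine Finset.sum_congr rfl fun e _ => ?_
                  simp only [hKjidef, Matrix.of_apply]
                  ring
              _ = ∑ b, ∑ p : {p : ι // J p = j}, ∑ e,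
                    (α p.1 * psi k H j (x p.1) b) * ((Kmat k H j)⁻¹ b e * Kji e a) :=
                  Finset.sum_comm
              _ = ∑ b, ∑ e, ∑ p : {p : ι // J p = j},
                    (α p.1 * psi k H j (x p.1) b) * ((Kmat k H j)⁻¹ b e * Kji e a) :=
                  Finset.sum_congr rfl fun b _ => Finset.sum_comm
              _ = ∑ b, ∑ e, u b * ((Kmat k H j)⁻¹ b e * Kji e a) := by
                  refine Finset.sum_congr rfl fun b _ =>
                    Finset.sum_congr rfl fun e _ => ?_
                  rw [hu, ← Finset.sum_mul]
              _ = (u ᵥ* ((Kmat k H j)⁻¹ * Kji)) a := by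
                  simp only [Matrix.vecMul, dotProduct, Matrix.mul_apply,
                    Finset.mul_sum]
          have hvjK : vj j ⬝ᵥ (Kmat k H i)⁻¹ *ᵥ vj j = vj j ⬝ᵥ dj j := by
            simp only [hdj]
          have s1 : vj j ⬝ᵥ dj j = u ⬝ᵥ cj := by
            rw [hvju, ← Matrix.dotProduct_mulVec, ← Matrix.mulVec_mulVec, ← hwv, ← hcjdef]
          have s2 : dj j ⬝ᵥ (Kmat k H i) *ᵥ dj j = vj j ⬝ᵥ dj j := by
            rw [hKd j, dotProduct_comm]
          have s3 : cj ⬝ᵥ (Kmat k H j) *ᵥ cj = wv ⬝ᵥ cj := by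
            have hc : (Kmat k H j) *ᵥ cj = wv := by
              rw [hcjdef]; exact inv_mulVec_cancel hKjdet wv
            rw [hc, dotProduct_comm]
          have s4 : (∑ a, ∑ b, dj j a * cj b * k (H.lm i a) (H.lm j b)) = wv ⬝ᵥ cj := by
            calc (∑ a, ∑ b, dj j a * cj b * k (H.lm i a) (H.lm j b))
                = ∑ a, ∑ b, dj j a * (Kjiᵀ a b) * cj b := by
                  refine Finset.sum_congr rfl fun a _ =>
                    Finset.sum_congr rfl fun b _ => ?_
                  simp only [Matrix.transpose_apply, hKjidef, Matrix.of_apply]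
                  rw [hsym (H.lm i a) (H.lm j b)]
                  ring
              _ = dj j ⬝ᵥ Kjiᵀ *ᵥ cj := ddot Kjiᵀ (dj j) cj
              _ = (Kji *ᵥ dj j) ⬝ᵥ cj := by
                  rw [Matrix.dotProduct_mulVec, Matrix.vecMul_transpose]
              _ = wv ⬝ᵥ cj := by rw [hwv]
          -- induction hypothesis at child j
          have hnj : H.numNodes - j.val ≤ n := by
            have hij' : i.val < j.val := hij
            have := i.isLt
            omega
          have hIH := IH j hnj {p : ι // J p = j} inferInstance (fun p => x p.1)
            (fun p q h => Subtype.ext (hinj h)) hxj (fun p => α p.1) cj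
          have hmid : (∑ p : {p : ι // J p = j},
                α p.1 * (∑ b, psi k H j (x p.1) b * cj b)) = u ⬝ᵥ cj := by
            simp only [Finset.mul_sum, dotProduct]
            rw [Finset.sum_comm]
            simp only [hu, Finset.sum_mul]
            exact Finset.sum_congr rfl fun b _ =>
              Finset.sum_congr rfl fun p _ => by ring
          have hlast : (∑ a, ∑ b, cj a * Kmat k H j a b * cj b)
              = cj ⬝ᵥ (Kmat k H j) *ᵥ cj := ddot (Kmat k H j) cj cj
          -- second quadratic form
          have hq2 := quadform_key k hk (Sum.elim (H.lm i) (H.lm j))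
            (Sum.elim (dj j) (fun b => - cj b))
          have hQ2eq : (∑ t, ∑ t', (Sum.elim (dj j) (fun b => - cj b)) t
                * (Sum.elim (dj j) (fun b => - cj b)) t'
                * k ((Sum.elim (H.lm i) (H.lm j)) t) ((Sum.elim (H.lm i) (H.lm j)) t'))
              = vj j ⬝ᵥ dj j - wv ⬝ᵥ cj := by
            simp only [Fintype.sum_sum_type, Sum.elim_inl, Sum.elim_inr]
            rw [Finset.sum_add_distrib, Finset.sum_add_distrib]
            have bII : (∑ a, ∑ b, dj j a * dj j b * k (H.lm i a) (H.lm i b))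
                = vj j ⬝ᵥ dj j := by
              rw [← s2, ← ddot (Kmat k H i) (dj j) (dj j)]
              exact Finset.sum_congr rfl fun a _ => Finset.sum_congr rfl fun b _ => by
                simp [Kmat]; ring
            have bIJ : (∑ a, ∑ b, dj j a * - cj b * k (H.lm i a) (H.lm j b))
                = -(wv ⬝ᵥ cj) := by
              rw [← s4, ← Finset.sum_neg_distrib]
              refine Finset.sum_congr rfl fun a _ => ?_
              rw [← Finset.sum_neg_distrib]
              exact Finset.sum_congr rfl fun b _ => by ring
            have bJI : (∑ b, ∑ a, - cj b * dj j a * k (H.lm j b) (H.lm i a))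
                = -(wv ⬝ᵥ cj) := by
              rw [← s4, ← Finset.sum_neg_distrib, Finset.sum_comm]
              refine Finset.sum_congr rfl fun a _ => ?_
              rw [← Finset.sum_neg_distrib]
              refine Finset.sum_congr rfl fun b _ => ?_
              rw [hsym (H.lm j b) (H.lm i a)]
              ring
            have bJJ : (∑ b, ∑ b', - cj b * - cj b' * k (H.lm j b) (H.lm j b'))
                = wv ⬝ᵥ cj := by
              rw [← s3, ← ddot (Kmat k H j) cj cj]
              exact Finset.sum_congr rfl fun b _ => Finset.sum_congr rfl fun b' _ => by
                simp [Kmat]; ring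
            rw [bII, bIJ, bJI, bJJ]
            ring
          -- combining
          have hAeq : Aj j
              = ((∑ p : {p : ι // J p = j}, ∑ q : {p : ι // J p = j},
                  α p.1 * α q.1 * khat k H j (x p.1) (x q.1))
                - 2 * (∑ p : {p : ι // J p = j},
                    α p.1 * (∑ b, psi k H j (x p.1) b * cj b))
                + (∑ a, ∑ b, cj a * Kmat k H j a b * cj b))
                + (vj j ⬝ᵥ dj j - wv ⬝ᵥ cj) := by
            rw [hAjP, hvjK, hmid, hlast, s3]
            linarith [s1]
          constructor
          · rw [hAeq, ← hQ2eq]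
            linarith [hIH.1, hq2.1]
          · intro hA0 z
            rw [hAeq] at hA0
            have hQ2nn : 0 ≤ vj j ⬝ᵥ dj j - wv ⬝ᵥ cj := by
              rw [← hQ2eq]; exact hq2.1
            have hD0 : ((∑ p : {p : ι // J p = j}, ∑ q : {p : ι // J p = j},
                  α p.1 * α q.1 * khat k H j (x p.1) (x q.1))
                - 2 * (∑ p : {p : ι // J p = j},
                    α p.1 * (∑ b, psi k H j (x p.1) b * cj b))
                + (∑ a, ∑ b, cj a * Kmat k H j a b * cj b)) = 0 := by
              linarith [hIH.1]
            have hQ0 : vj j ⬝ᵥ dj j - wv ⬝ᵥ cj = 0 := by linarith [hIH.1]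
            have hIHz := hIH.2 hD0 z
            have hq2z := hq2.2 (by rw [hQ2eq]; exact hQ0) z
            simp only [Fintype.sum_sum_type, Sum.elim_inl, Sum.elim_inr] at hq2z
            have hR : (∑ b, if H.lm j b = z then - cj b else 0)
                = - ∑ b, if H.lm j b = z then cj b else 0 := by
              rw [← Finset.sum_neg_distrib]
              exact Finset.sum_congr rfl fun b _ => by
                by_cases hz : H.lm j b = z <;> simp [hz]
            replace hq2z : (∑ a, if H.lm i a = z then dj j a else 0)
                + - (∑ b, if H.lm j b = z then cj b else 0) = 0 := by
              rw [← hR]; exact hq2z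
            have hL : (∑ p, if J p = j ∧ x p = z then α p else 0)
                = ∑ p : {p : ι // J p = j}, if x p.1 = z then α p.1 else 0 := by
              rw [← conv1 (fun p => if x p = z then α p else 0)]
              refine Finset.sum_congr rfl fun p _ => ?_
              by_cases hp : J p = j <;> by_cases hxz : x p = z <;> simp [hp, hxz]
            rw [hL, hIHz]
            linarith
      -- conclusion
      have hAjsum : 0 ≤ ∑ j, Aj j := Finset.sum_nonneg fun j _ => (hAj j).1
      have hwKw := posdef_facts hK w
      constructor
      · rw [hdecomp]; linarith [hwKw.1]
      · intro h0
        rw [hdecomp] at h0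
        have hS0 : ∑ j, Aj j = 0 := le_antisymm (by linarith [hwKw.1]) hAjsum
        have hw0 : w = 0 := hwKw.2 (by linarith)
        have hAj0 : ∀ j, Aj j = 0 := by
          intro j
          have := (Finset.sum_eq_zero_iff_of_nonneg (fun j _ => (hAj j).1)).mp hS0
          exact this j (Finset.mem_univ j)
        have hc : (Kmat k H i)⁻¹ *ᵥ v = c := by
          have := sub_eq_zero.mp hw0
          exact this
        intro z
        calc (∑ p, if x p = z then α p else 0)
            = ∑ p, ∑ j, if J p = j ∧ x p = z then α p else 0 := by
              refine Finset.sum_congr rfl fun p _ => ?_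
              rw [Finset.sum_eq_single (J p)]
              · simp
              · intro b _ hb; simp [Ne.symm hb]
              · intro h; exact absurd (Finset.mem_univ _) h
          _ = ∑ j, ∑ p, if J p = j ∧ x p = z then α p else 0 := Finset.sum_comm
          _ = ∑ j, ∑ a, if H.lm i a = z then dj j a else 0 :=
              Finset.sum_congr rfl fun j _ => (hAj j).2 (hAj0 j) z
          _ = ∑ a, ∑ j, if H.lm i a = z then dj j a else 0 := Finset.sum_comm
          _ = ∑ a, if H.lm i a = z then c a else 0 := by
              refine Finset.sum_congr rfl fun a _ => ?_
              by_cases hz : H.lm i a = z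
              · simp only [if_pos hz]
                rw [← hc]
                calc ∑ j, dj j a = ∑ j, ∑ b, (Kmat k H i)⁻¹ a b * vj j b := by
                      exact Finset.sum_congr rfl fun j _ => rfl
                  _ = ∑ b, ∑ j, (Kmat k H i)⁻¹ a b * vj j b := Finset.sum_comm
                  _ = ∑ b, (Kmat k H i)⁻¹ a b * v b := by
                      refine Finset.sum_congr rfl fun b _ => ?_
                      rw [← Finset.mul_sum]
                      rw [hvsum b]
                  _ = ((Kmat k H i)⁻¹ *ᵥ v) a := rfl
              · simp [hz]

end HierPartition

/-- if `k` is a strictly positive-definite kernel and `(T, {Sᵢ}, {X̄ᵢ})` is a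
hierarchical partitioning of `𝒳` (strict positive-definiteness of `k` guarantees that each
landmark kernel matrix `K(X̄ᵢ,X̄ᵢ)` is invertible), then the hierarchically compositional
kernel `k_hier = k^(root)` is strictly positive-definite. -/
theorem kHier_strictPosDefKernel {𝒳 : Type*} (k : 𝒳 → 𝒳 → ℝ)
    (hsym : ∀ x y, k x y = k y x)
    (hk : StrictPosDefKernel k)
    (H : HierPartition 𝒳) :
    StrictPosDefKernel (HierPartition.kHier k H) := by
  classical
  intro m x hinj α hα
  have hxS : ∀ p, x p ∈ H.S H.root := by
    intro p; rw [H.S_root]; exact Set.mem_univ _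
  have hmain := HierPartition.main_ind k hsym hk H (H.numNodes - H.root.val) H.root le_rfl
    (Fin m) inferInstance x hinj hxS α (fun _ => 0)
  simp only [mul_zero, Finset.sum_const_zero, zero_mul, sub_zero, add_zero,
    Finset.mul_sum] at hmain
  rcases hmain with ⟨h1, h2⟩
  rcases lt_or_eq_of_le h1 with h | h
  · exact h
  · exfalso
    obtain ⟨p₀, hp₀⟩ := Function.ne_iff.mp hα
    have := h2 h.symm (x p₀)
    rw [Finset.sum_eq_single p₀] at this
    · simp at this
      exact hp₀ this
    · intro q _ hq
      have : x q ≠ x p₀ := fun hh => hq (hinj hh)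
      simp [this]
    · intro hmem; exact absurd (Finset.mem_univ _) hmem
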